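/- Let v₁, …, v_n be a basis of ℝⁿ, Λ = {Σᵢ cᵢvᵢ : cᵢ ∈ ℤ} the lattice it spans, U = {Σᵢ tᵢvᵢ : tᵢ ∈ [0,1)} its unit cell, d the diameter of U, M ⊂ U a finite motif of exactly m ≥ 1 points, S = M + Λ, V_n the Lebesgue volume of the unit ball of ℝⁿ, and PPC(S) = (vol(U)/(m·V_n))^{1/n}. Then for every p ∈ S and every r ≥ d, the cardinality of the intersection of S with the closed Euclidean ball B̄(p,r) satisfies ((r − d)/PPC(S))ⁿ ≤ |S ∩ B̄(p,r)|, equivalently m·V_n·(r − d)ⁿ ≤ |S ∩ B̄(p,r)|·vol(U). -/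

import Mathlib

open scoped ENNReal

open MeasureTheory

private lemma aux_mem_span (n : ℕ) (v : Module.Basis (Fin n) ℝ (EuclideanSpace ℝ (Fin n)))
    (x : EuclideanSpace ℝ (Fin n)) :
    x ∈ Submodule.span ℤ (Set.range v) ↔ ∃ c : Fin n → ℤ, x = ∑ i, (c i : ℝ) • v i := by
  rw [Submodule.mem_span_range_iff_exists_fun]
  constructor
  · rintro ⟨c, hc⟩
    exact ⟨c, by rw [← hc]; exact Finset.sum_congr rfl fun i _ => (Int.cast_smul_eq_zsmul ℝ _ _).symm⟩
  · rintro ⟨c, hc⟩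
    exact ⟨c, by rw [hc]; exact Finset.sum_congr rfl fun i _ => (Int.cast_smul_eq_zsmul ℝ _ _).symm⟩

private lemma aux_fd (n : ℕ) (v : Module.Basis (Fin n) ℝ (EuclideanSpace ℝ (Fin n))) :
    {x : EuclideanSpace ℝ (Fin n) | ∃ t : Fin n → ℝ, (∀ i, t i ∈ Set.Ico (0 : ℝ) 1) ∧
      x = ∑ i, t i • v i} = ZSpan.fundamentalDomain v := by
  ext x
  simp only [Set.mem_setOf_eq, ZSpan.mem_fundamentalDomain]
  constructor
  · rintro ⟨t, ht, rfl⟩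
    intro i; rw [Module.Basis.repr_sum_self]; exact ht i
  · intro h
    exact ⟨fun i => v.repr x i, h, (v.sum_repr x).symm⟩

/-- Let `Λ` be the lattice spanned by a basis `v₁,…,v_n` of
`ℝⁿ`, `U = {Σ tᵢvᵢ : tᵢ ∈ [0,1)}` its unit cell with diameter `d`, `M ⊂ U` a
motif of exactly `m ≥ 1` points and `S = M + Λ`. Then for every `p ∈ S` and
`r ≥ d` we have `((r−d)/PPC(S))ⁿ ≤ |S ∩ B̄(p,r)|`, equivalently
`m·V_n·(r−d)ⁿ ≤ |S ∩ B̄(p,r)|·vol(U)` where `V_n` is the volume of the unit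
ball of `ℝⁿ`. -/
theorem stmt_15 (n m : ℕ) (hn : 1 ≤ n) (hm : 1 ≤ m)
    (v : Module.Basis (Fin n) ℝ (EuclideanSpace ℝ (Fin n)))
    (Λ : Set (EuclideanSpace ℝ (Fin n)))
    (hΛ : Λ = {x | ∃ c : Fin n → ℤ, x = ∑ i, (c i : ℝ) • v i})
    (U : Set (EuclideanSpace ℝ (Fin n)))
    (hU : U = {x | ∃ t : Fin n → ℝ, (∀ i, t i ∈ Set.Ico (0 : ℝ) 1) ∧
      x = ∑ i, t i • v i})
    (d : ℝ) (hd : d = Metric.diam U)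
    (M : Finset (EuclideanSpace ℝ (Fin n))) (hMcard : M.card = m)
    (hMU : ∀ a ∈ M, a ∈ U)
    (S : Set (EuclideanSpace ℝ (Fin n)))
    (hS : S = {x | ∃ a ∈ M, ∃ g ∈ Λ, x = a + g}) :
    ∀ p ∈ S, ∀ r : ℝ, d ≤ r →
      (m : ℝ≥0∞) *
          MeasureTheory.volume (Metric.ball (0 : EuclideanSpace ℝ (Fin n)) 1) *
          ENNReal.ofReal ((r - d) ^ n) ≤
        ((S ∩ Metric.closedBall p r).ncard : ℝ≥0∞) * MeasureTheory.volume U := by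
  classical
  intro p hp r hr
  have hE : True := trivial
  haveI : Nontrivial (EuclideanSpace ℝ (Fin n)) := nontrivial_of_ne (v ⟨0, hn⟩) 0 (v.ne_zero _)
  set L := Submodule.span ℤ (Set.range v) with hLdef
  have hΛ' : Λ = (L : Set (EuclideanSpace ℝ (Fin n))) := by
    rw [hΛ]; ext x; exact ((aux_mem_span n v x)).symm
  set F := ZSpan.fundamentalDomain v with hFdef
  have hU' : U = F := by rw [hU]; exact aux_fd n v
  have hbd : Bornology.IsBounded F := ZSpan.fundamentalDomain_isBounded v
  have hLclosed : IsClosed (L : Set (EuclideanSpace ℝ (Fin n))) := by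
    have : DiscreteTopology L.toAddSubgroup := inferInstance
    exact AddSubgroup.isClosed_of_discrete (H := L.toAddSubgroup)
  haveI : DiscreteTopology ((L : Set (EuclideanSpace ℝ (Fin n))) : Set (EuclideanSpace ℝ (Fin n))) :=
    inferInstanceAs (DiscreteTopology L)
  have hLfin : ∀ C : ℝ, (Metric.closedBall (0:(EuclideanSpace ℝ (Fin n))) C ∩ (L : Set (EuclideanSpace ℝ (Fin n)))).Finite := fun C =>
    Metric.finite_isBounded_inter_isClosed DiscreteTopology.isDiscrete Metric.isBounded_closedBall hLclosed
  obtain ⟨R, hR⟩ := hbd.subset_closedBall 0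
  -- trivial case r = d
  rcases eq_or_lt_of_le hr with heq | hlt
  · rw [← heq, sub_self, zero_pow (by omega : n ≠ 0), ENNReal.ofReal_zero, mul_zero]
    exact zero_le'
  set ρ := r - d with hρdef
  have hρpos : 0 < ρ := sub_pos.mpr hlt
  have hd0 : 0 ≤ d := hd ▸ Metric.diam_nonneg
  -- the relevant set of lattice translates
  set G : Set (EuclideanSpace ℝ (Fin n)) := {g | g ∈ L ∧ ∃ x ∈ Metric.ball p ρ, g + x ∈ F} with hGdef
  have hGfin : G.Finite := by
    refine (hLfin (R + (‖p‖ + ρ))).subset ?_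
    rintro g ⟨hgL, x, hx, hgx⟩
    refine ⟨?_, hgL⟩
    rw [Metric.mem_closedBall, dist_zero_right]
    have h1 : ‖g + x‖ ≤ R := by
      have := hR hgx; rwa [Metric.mem_closedBall, dist_zero_right] at this
    have h2 : ‖x‖ ≤ ‖p‖ + ρ := by
      have := Metric.mem_ball.mp hx
      calc ‖x‖ = dist x 0 := (dist_zero_right x).symm
        _ ≤ dist x p + dist p 0 := dist_triangle _ _ _
        _ ≤ ρ + ‖p‖ := by rw [dist_zero_right]; linarith
        _ = ‖p‖ + ρ := by ring
    calc ‖g‖ = ‖(g + x) - x‖ := by congr 1; abel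
      _ ≤ ‖g + x‖ + ‖x‖ := norm_sub_le _ _
      _ ≤ R + (‖p‖ + ρ) := add_le_add h1 h2
  -- covering of the small ball by translates of F
  have hcover : Metric.ball p ρ ⊆ ⋃ g ∈ hGfin.toFinset, (fun y => y - g) '' F := by
    intro x hx
    obtain ⟨g, hg, -⟩ := ZSpan.exist_unique_vadd_mem_fundamentalDomain v x
    have hgF : (g : (EuclideanSpace ℝ (Fin n))) + x ∈ F := hg
    refine Set.mem_iUnion₂.mpr ⟨(g : (EuclideanSpace ℝ (Fin n))), ?_,
      ⟨(g : (EuclideanSpace ℝ (Fin n))) + x, hgF, add_sub_cancel_left _ _⟩⟩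
    exact (Set.Finite.mem_toFinset hGfin).mpr ⟨g.2, x, hx, hgF⟩
  -- volume estimate
  have hvol : volume (Metric.ball p ρ) ≤ (hGfin.toFinset.card : ℝ≥0∞) * volume F := by
    calc volume (Metric.ball p ρ) ≤ ∑ g ∈ hGfin.toFinset, volume ((fun y => y - g) '' F) :=
          (measure_mono hcover).trans (measure_biUnion_finset_le _ _)
      _ = ∑ _g ∈ hGfin.toFinset, volume F := by
          refine Finset.sum_congr rfl fun g _ => ?_
          have himg : (fun y => y - g) '' F = (fun y => y + g) ⁻¹' F := by
            ext y
            simp only [Set.mem_image, Set.mem_preimage]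
            constructor
            · rintro ⟨z, hz, rfl⟩; simpa [sub_add_cancel] using hz
            · intro h; exact ⟨y + g, h, by abel⟩
          rw [himg, measure_preimage_add_right]
      _ = (hGfin.toFinset.card : ℝ≥0∞) * volume F := by rw [Finset.sum_const, nsmul_eq_mul]
  have hball : volume (Metric.ball p ρ)
      = ENNReal.ofReal (ρ ^ n) * volume (Metric.ball (0:(EuclideanSpace ℝ (Fin n))) 1) := by
    rw [Measure.addHaar_ball volume p hρpos.le, finrank_euclideanSpace_fin]
  -- injection from M × hGfin.toFinset into S ∩ closedBall p r
  set T := S ∩ Metric.closedBall p r with hT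
  have hMF : ∀ a ∈ M, a ∈ F := fun a ha => hU' ▸ hMU a ha
  have hdF : Metric.diam F = d := by rw [hd, hU']
  -- finiteness of T
  have hTfin : T.Finite := by
    have : T ⊆ (fun q : (EuclideanSpace ℝ (Fin n)) × (EuclideanSpace ℝ (Fin n)) => q.1 + q.2) ''
        ((↑M : Set (EuclideanSpace ℝ (Fin n))) ×ˢ (Metric.closedBall (0:(EuclideanSpace ℝ (Fin n))) (‖p‖ + r + R) ∩ (L : Set (EuclideanSpace ℝ (Fin n))))) := by
      rintro x ⟨hxS, hxB⟩
      rw [hS] at hxS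
      obtain ⟨a, haM, g, hgΛ, rfl⟩ := hxS
      refine ⟨(a, g), ⟨haM, ?_, hΛ' ▸ hgΛ⟩, rfl⟩
      rw [Metric.mem_closedBall, dist_zero_right]
      have h1 : ‖a + g‖ ≤ ‖p‖ + r := by
        have := Metric.mem_closedBall.mp hxB
        calc ‖a + g‖ = dist (a + g) 0 := (dist_zero_right _).symm
          _ ≤ dist (a + g) p + dist p 0 := dist_triangle _ _ _
          _ ≤ r + ‖p‖ := by rw [dist_zero_right]; linarith
          _ = ‖p‖ + r := by ring
      have h2 : ‖a‖ ≤ R := by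
        have := hR (hMF a haM); rwa [Metric.mem_closedBall, dist_zero_right] at this
      calc ‖g‖ = ‖(a + g) - a‖ := by congr 1; abel
        _ ≤ ‖a + g‖ + ‖a‖ := norm_sub_le _ _
        _ ≤ (‖p‖ + r) + R := add_le_add h1 h2
    exact Set.Finite.subset (Set.Finite.image _ ((M.finite_toSet).prod (hLfin _))) this
  -- the map (a,g) ↦ a - g lands in T
  have hmaps : ∀ q ∈ (↑(M ×ˢ hGfin.toFinset) : Set ((EuclideanSpace ℝ (Fin n)) × (EuclideanSpace ℝ (Fin n)))), q.1 - q.2 ∈ T := by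
    rintro ⟨a, g⟩ hq
    rw [Finset.coe_product, Set.mem_prod] at hq
    obtain ⟨haM, hgG⟩ := hq
    simp only [Finset.mem_coe, Set.Finite.mem_toFinset] at hgG
    obtain ⟨hgL, x, hx, hgx⟩ := hgG
    constructor
    · rw [hS]
      exact ⟨a, haM, -g, by rw [hΛ']; exact neg_mem hgL, by abel⟩
    · rw [Metric.mem_closedBall]
      have h1 : dist (a - g) x ≤ d := by
        have : dist (a - g) x = dist a (g + x) := by
          rw [dist_eq_norm, dist_eq_norm]; congr 1; abel
        rw [this, ← hdF]
        exact Metric.dist_le_diam_of_mem hbd (hMF a haM) hgx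
      have h2 : dist x p < ρ := Metric.mem_ball.mp hx
      calc dist (a - g) p ≤ dist (a - g) x + dist x p := dist_triangle _ _ _
        _ ≤ d + ρ := by linarith
        _ = r := by rw [hρdef]; ring
  -- injectivity
  have hinj : Set.InjOn (fun q : (EuclideanSpace ℝ (Fin n)) × (EuclideanSpace ℝ (Fin n)) => q.1 - q.2) (↑(M ×ˢ hGfin.toFinset) : Set ((EuclideanSpace ℝ (Fin n)) × (EuclideanSpace ℝ (Fin n)))) := by
    rintro ⟨a, g⟩ hq ⟨a', g'⟩ hq' heq
    rw [Finset.coe_product, Set.mem_prod] at hq hq'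
    obtain ⟨haM, hgG⟩ := hq
    obtain ⟨haM', hgG'⟩ := hq'
    simp only [Finset.mem_coe, Set.Finite.mem_toFinset] at hgG hgG'
    simp only at heq
    -- a - g = a' - g'
    set w : L := ⟨g' - g, sub_mem hgG'.1 hgG.1⟩ with hw
    have hwa : (w : (EuclideanSpace ℝ (Fin n))) + a = a' := by
      have h : a - g = a' - g' := heq
      have h2 : a' = a - g + g' := (sub_eq_iff_eq_add.mp h.symm)
      show g' - g + a = a'
      rw [h2]; abel
    obtain ⟨u, -, huniq⟩ := ZSpan.exist_unique_vadd_mem_fundamentalDomain v a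
    have h1 : w = u := huniq w (by show (w : (EuclideanSpace ℝ (Fin n))) + a ∈ F; rw [hwa]; exact hMF a' haM')
    have h2 : (0 : L) = u := huniq 0 (by show ((0 : L) : (EuclideanSpace ℝ (Fin n))) + a ∈ F; simpa using hMF a haM)
    have hww : (w : (EuclideanSpace ℝ (Fin n))) = 0 := by rw [h1.trans h2.symm]; rfl
    have hgg : g = g' := (sub_eq_zero.mp hww).symm
    have haa : a = a' := by
      have h : a - g = a' - g' := heq
      rw [← hgg] at h
      exact sub_left_inj.mp h
    exact Prod.ext haa hgg
  -- cardinality estimate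
  have hcard : M.card * hGfin.toFinset.card ≤ T.ncard := by
    have h1 := Set.ncard_le_ncard_of_injOn _ hmaps hinj hTfin
    rwa [Set.ncard_coe_finset, Finset.card_product] at h1
  -- assembling everything
  calc (m : ℝ≥0∞) * volume (Metric.ball (0 : EuclideanSpace ℝ (Fin n)) 1)
        * ENNReal.ofReal ((r - d) ^ n)
      = (m : ℝ≥0∞) * volume (Metric.ball p ρ) := by rw [hball]; ring
    _ ≤ (m : ℝ≥0∞) * ((hGfin.toFinset.card : ℝ≥0∞) * volume F) := mul_le_mul_right hvol _
    _ = ((M.card * hGfin.toFinset.card : ℕ) : ℝ≥0∞) * volume F := by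
        rw [hMcard]; push_cast; ring
    _ ≤ (T.ncard : ℝ≥0∞) * volume F := mul_le_mul_left (Nat.cast_le.mpr hcard) _
    _ = ((S ∩ Metric.closedBall p r).ncard : ℝ≥0∞) * volume U := by rw [hT, hU']
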